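/- Let X be a metric space equipped with a convex bicombing, let C ⊆ X be a compact convex subset, let E ⊆ C be an extremal subset of C, and let φ : E → ℝ be a continuous convex function. Then the set E_φ = { e ∈ E : φ(e) = max_{x ∈ E} φ(x) } of maximizers of φ on E is an extremal subset of C. -/

import Mathlib

open Set

/-- A convex bicombing on a metric space `X`: for each pair of points `x, y` a
continuous path `path x y : [0,1] → X` from `x` to `y`, with `path x x ≡ x`,
such that distances between paths are convex functions of the parameter. -/
structure ConvexBicombing (X : Type*) [MetricSpace X] where
  path : X → X → ℝ → X
  continuousOn : ∀ x y : X, ContinuousOn (path x y) (Icc 0 1)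
  path_zero : ∀ x y : X, path x y 0 = x
  path_one : ∀ x y : X, path x y 1 = y
  path_self : ∀ x : X, ∀ t ∈ Icc (0:ℝ) 1, path x x t = x
  dist_convexOn : ∀ x y x' y' : X,
    ConvexOn ℝ (Icc (0:ℝ) 1) (fun t => dist (path x y t) (path x' y' t))

/-- A set is convex with respect to the bicombing if it contains the path
between any two of its points. -/
def ConvexBicombing.IsConvexSet {X : Type*} [MetricSpace X] (B : ConvexBicombing X)
    (C : Set X) : Prop :=
  ∀ x ∈ C, ∀ y ∈ C, ∀ t ∈ Icc (0:ℝ) 1, B.path x y t ∈ C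

/-- `E` is an extremal subset of the convex set `C`: it is closed, nonempty,
contained in `C`, and whenever a path between points of `C` meets `E` at an
interior parameter, the whole path lies in `E`. -/
def ConvexBicombing.IsExtremal {X : Type*} [MetricSpace X] (B : ConvexBicombing X)
    (C E : Set X) : Prop :=
  IsClosed E ∧ E.Nonempty ∧ E ⊆ C ∧
    ∀ x ∈ C, ∀ y ∈ C, (∃ t ∈ Ioo (0:ℝ) 1, B.path x y t ∈ E) →
      ∀ s ∈ Icc (0:ℝ) 1, B.path x y s ∈ E

/-- The set of maximizers of a continuous convex function on an extremal
subset of a compact convex set is again an extremal subset. -/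
theorem maximizers_extremal {X : Type*} [MetricSpace X]
    (B : ConvexBicombing X) (C : Set X) (hC : IsCompact C) (hCconv : B.IsConvexSet C)
    (E : Set X) (hE : B.IsExtremal C E) (φ : X → ℝ)
    (hcont : ContinuousOn φ E)
    (hφconv : ∀ x ∈ E, ∀ y ∈ E, (∀ t ∈ Icc (0:ℝ) 1, B.path x y t ∈ E) →
      ConvexOn ℝ (Icc (0:ℝ) 1) (fun t => φ (B.path x y t))) :
    B.IsExtremal C {e ∈ E | ∀ x ∈ E, φ x ≤ φ e} := by
  obtain ⟨hEclosed, hEne, hEC, hEext⟩ := hE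
  have hEcomp : IsCompact E := hC.of_isClosed_subset hEclosed hEC
  refine ⟨?_, ?_, fun e he => hEC he.1, ?_⟩
  · have heq : {e ∈ E | ∀ x ∈ E, φ x ≤ φ e} = ⋂ x ∈ E, (E ∩ φ ⁻¹' Ici (φ x)) := by
      ext e
      simp only [mem_setOf_eq, mem_iInter, mem_inter_iff, mem_preimage, mem_Ici]
      obtain ⟨z, hz⟩ := hEne
      exact ⟨fun ⟨he, h⟩ x hx => ⟨he, h x hx⟩, fun h => ⟨(h z hz).1, fun x hx => (h x hx).2⟩⟩
    rw [heq]
    exact isClosed_biInter fun x hx =>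
      hcont.preimage_isClosed_of_isClosed hEclosed isClosed_Ici
  · obtain ⟨e, he, hmax⟩ := hEcomp.exists_isMaxOn hEne hcont
    exact ⟨e, he, fun z hz => hmax hz⟩
  · rintro x hx y hy ⟨t, ht, hpE, hpmax⟩ s hs
    have htI : t ∈ Icc (0:ℝ) 1 := ⟨ht.1.le, ht.2.le⟩
    have hall : ∀ u ∈ Icc (0:ℝ) 1, B.path x y u ∈ E :=
      hEext x hx y hy ⟨t, ht, hpE⟩
    have hxE : x ∈ E := by
      have := hall 0 ⟨le_refl 0, zero_le_one⟩; rwa [B.path_zero] at this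
    have hyE : y ∈ E := by
      have := hall 1 ⟨zero_le_one, le_refl 1⟩; rwa [B.path_one] at this
    have hconv := hφconv x hxE y hyE hall
    set M := φ (B.path x y t) with hM
    have hf0 : φ (B.path x y 0) ≤ M := hpmax _ (hall 0 ⟨le_refl 0, zero_le_one⟩)
    have hf1 : φ (B.path x y 1) ≤ M := hpmax _ (hall 1 ⟨zero_le_one, le_refl 1⟩)
    have hkey : M ≤ φ (B.path x y s) := by
      rcases lt_trichotomy s t with hst | hst | hst
      · have h1s : 0 < 1 - s := by linarith [ht.2]
        have ha0 : 0 ≤ (1 - t) / (1 - s) := by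
          apply div_nonneg <;> linarith [ht.2]
        have hb0 : 0 ≤ (t - s) / (1 - s) := by
          apply div_nonneg <;> linarith
        have hapos : 0 < (1 - t) / (1 - s) := by
          apply div_pos <;> linarith [ht.2]
        have habs : (1 - t) / (1 - s) + (t - s) / (1 - s) = 1 := by
          field_simp; ring
        have key := hconv.2 hs (show (1:ℝ) ∈ Icc 0 1 from ⟨zero_le_one, le_refl 1⟩) ha0 hb0 habs
        simp only [smul_eq_mul] at key
        have hcomb : (1 - t) / (1 - s) * s + (t - s) / (1 - s) * 1 = t := by
          field_simp; ring
        rw [hcomb, ← hM] at key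
        have h := mul_le_mul_of_nonneg_left key h1s.le
        have e1 : (1 - s) * ((1 - t) / (1 - s) * φ (B.path x y s)
            + (t - s) / (1 - s) * φ (B.path x y 1))
            = (1 - t) * φ (B.path x y s) + (t - s) * φ (B.path x y 1) := by
          field_simp
        rw [e1] at h
        nlinarith [mul_le_mul_of_nonneg_left hf1 (sub_nonneg.2 hst.le), ht.2]
      · rw [hst]
      · have hspos : 0 < s := ht.1.trans hst
        have ha0 : 0 ≤ 1 - t / s := by
          have : t / s ≤ 1 := (div_le_one hspos).2 hst.le
          linarith
        have hb0 : 0 ≤ t / s := div_nonneg ht.1.le hspos.le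
        have hbpos : t / s < 1 := (div_lt_one hspos).2 hst
        have habs : (1 - t / s) + t / s = 1 := by ring
        have key := hconv.2 (show (0:ℝ) ∈ Icc 0 1 from ⟨le_refl 0, zero_le_one⟩) hs ha0 hb0 habs
        simp only [smul_eq_mul] at key
        have hcomb : (1 - t / s) * 0 + t / s * s = t := by
          field_simp; ring
        rw [hcomb, ← hM] at key
        have h := mul_le_mul_of_nonneg_left key hspos.le
        have e1 : s * ((1 - t / s) * φ (B.path x y 0) + t / s * φ (B.path x y s))
            = (s - t) * φ (B.path x y 0) + t * φ (B.path x y s) := by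
          field_simp
        rw [e1] at h
        nlinarith [mul_le_mul_of_nonneg_left hf0 (sub_nonneg.2 hst.le), ht.1]
    exact ⟨hall s hs, fun z hz => le_trans (hpmax z hz) hkey⟩
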